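/- arXiv:2308.03067 — 2 statements merged into one kernel-verified Lean document; each statement's English description precedes it below -/
import Mathlib

section
/- Let I be a left rooted quiver and A an abelian category with exact coproducts. Let S = {S_i} be a family of full subcategories of A, each closed under extensions and small coproducts, such that S is compatible (i.e. S_i ⊆ S_j along every arrow i → j, under the identity transition functors). Then for every representation M of I in A with the property that the canonical morphism φ_i^M : ⨁_{arrows a with target i} M_{s(a)} → M_i is a monomorphism with cokernel in S_i for all i, one has M_i ∈ S_i for all vertices i. -/
universe v u

namespace Paper

open CategoryTheory CategoryTheory.Limits

/-- The transfinite filtration `χ ↦ ⋃_{μ ≤ χ} V_μ` of the vertex set of a quiver, where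
`V_0 = ∅`, `V_{χ+1}` is the set of vertices that are not the target of any arrow whose
source lies outside `⋃_{μ ≤ χ} V_μ`, and `V_χ = ⋃_{μ < χ} V_μ` at limit ordinals. -/
noncomputable def rootFiltration (V : Type v) [Quiver V] (χ : Ordinal.{v}) : Set V :=
  Ordinal.limitRecOn χ
    (∅ : Set V)
    (fun _ W => W ∪ { i : V | ∀ ⦃j : V⦄, (j ⟶ i) → j ∈ W })
    (fun χ' _ ih => ⋃ (μ : Ordinal.{v}) (h : μ < χ'), ih μ h)

/-- A quiver is left rooted if the transfinite sequence `V_χ` exhausts all the vertices. -/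
def IsLeftRooted (V : Type v) [Quiver V] : Prop :=
  ∃ lam : Ordinal.{v}, rootFiltration V lam = Set.univ

/-- `0 → X → Y → Z → 0` is a short exact sequence. -/
def IsSES {A : Type u} [Category.{v} A] [Abelian A] {X Y Z : A}
    (i : X ⟶ Y) (p : Y ⟶ Z) : Prop :=
  Mono i ∧ Epi p ∧ ∃ w : i ≫ p = 0, (ShortComplex.mk i p w).Exact

/-- A representation of a quiver `V` in a category `A`. -/
structure QuivRep (V : Type v) [Quiver.{v} V] (A : Type u) [Category.{v} A] where
  obj : V → A
  map : ∀ ⦃i j : V⦄, (i ⟶ j) → (obj i ⟶ obj j)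

variable {V : Type v} [Quiver.{v} V] {A : Type u} [Category.{v} A]

/-- The canonical morphism `φᵢᴹ : ⨁_{a ∈ I(•,i)} M_{s(a)} ⟶ M_i` induced by the structure
maps of a quiver representation `M`. -/
noncomputable def phi [HasCoproducts.{v} A] (M : QuivRep V A) (i : V) :
    (∐ fun p : Σ j : V, j ⟶ i => M.obj p.1) ⟶ M.obj i :=
  Sigma.desc fun p => M.map p.2


theorem rootFiltration_succ (V : Type v) [Quiver V] (χ : Ordinal.{v}) :
    rootFiltration V (Order.succ χ) =
      rootFiltration V χ ∪ { i : V | ∀ ⦃j : V⦄, (j ⟶ i) → j ∈ rootFiltration V χ } :=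
  Ordinal.limitRecOn_succ ..

theorem rootFiltration_limit (V : Type v) [Quiver V] {χ : Ordinal.{v}} (h : Order.IsSuccLimit χ) :
    rootFiltration V χ = ⋃ (μ : Ordinal.{v}) (_ : μ < χ), rootFiltration V μ :=
  Ordinal.limitRecOn_limit _ _ _ _ h

end Paper

open Paper CategoryTheory CategoryTheory.Limits in
theorem stmt7 (V : Type v) [Quiver.{v} V] (hV : IsLeftRooted V)
    (A : Type u) [Category.{v} A] [Abelian A] [HasCoproducts.{v} A] [AB4 A]
    (S : V → A → Prop)
    (hext : ∀ i : V, ∀ ⦃X Y Z : A⦄ (f : X ⟶ Y) (g : Y ⟶ Z),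
      IsSES f g → S i X → S i Z → S i Y)
    (hcoprod : ∀ i : V, ∀ (ι : Type v) (g : ι → A), (∀ x, S i (g x)) → S i (∐ g))
    (hcompat : ∀ ⦃i j : V⦄, (i ⟶ j) → ∀ X : A, S i X → S j X)
    (M : QuivRep V A)
    (hM : ∀ i : V, Mono (phi M i) ∧ S i (cokernel (phi M i))) :
    ∀ i : V, S i (M.obj i) := by
  have key : ∀ χ : Ordinal.{v}, ∀ i ∈ rootFiltration V χ, S i (M.obj i) := by
    intro χ
    induction χ using Ordinal.induction with
    | _ χ ih =>
      rcases Ordinal.zero_or_succ_or_isSuccLimit χ with h0 | ⟨μ, rfl⟩ | hlim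
      · subst h0
        intro i hi
        simp [rootFiltration] at hi
      · intro i hi
        rw [rootFiltration_succ] at hi
        rcases hi with hi | hi
        · exact ih μ (Order.lt_succ μ) i hi
        · have hsrc : ∀ p : Σ j : V, j ⟶ i, S i (M.obj p.1) := fun p =>
            hcompat p.2 _ (ih μ (Order.lt_succ μ) p.1 (hi p.2))
          have hco : S i (∐ fun p : Σ j : V, j ⟶ i => M.obj p.1) :=
            hcoprod i _ _ hsrc
          have hmono := (hM i).1
          refine hext i (phi M i) (cokernel.π (phi M i)) ?_ hco (hM i).2
          refine ⟨hmono, inferInstance, cokernel.condition _, ?_⟩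
          exact ShortComplex.exact_of_g_is_cokernel _ (cokernelIsCokernel _)
      · intro i hi
        rw [rootFiltration_limit V hlim] at hi
        simp only [Set.mem_iUnion] at hi
        obtain ⟨μ, hμ, hi⟩ := hi
        exact ih μ hμ i hi
  obtain ⟨lam, hlam⟩ := hV
  intro i
  exact key lam i (hlam ▸ Set.mem_univ i)
end

section
/- Let I be a left rooted quiver, A an abelian category with exact coproducts, and suppose for each arrow a : i → j an exact coproduct-preserving functor D_a : A → A is given (forming an I-diagram). Let Q_• be a family of full subcategories with D_a(Q_i) ⊆ Q_j for all arrows a. If ω : M → N is a morphism of representations over this diagram such that for every vertex i the induced morphism ρ_i : M_i ⊔_{L_i(M)} L_i(N) → N_i (from the pushout of the latching maps) is a monomorphism with cokernel in Q_i, then ω is a monomorphism, i.e. each ω_i is a monomorphism. -/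
universe v u

namespace Paper

open CategoryTheory CategoryTheory.Limits

variable {V : Type v} [Quiver.{v} V] {A : Type u} [Category.{v} A]

/-- A representation over the `I`-diagram on `A` determined by the transition functors
`D_a : A ⥤ A` attached to the arrows of the quiver `V`. -/
structure DiaRep (D : ∀ ⦃i j : V⦄, (i ⟶ j) → (A ⥤ A)) where
  obj : V → A
  map : ∀ ⦃i j : V⦄ (a : i ⟶ j), (D a).obj (obj i) ⟶ obj j

variable (D : ∀ ⦃i j : V⦄, (i ⟶ j) → (A ⥤ A))

/-- The latching object `L_i(M) = ⨁_{a ∈ I(•,i)} D_a (M_{s(a)})`. -/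
noncomputable def latchObj [HasCoproducts.{v} A] (M : DiaRep D) (i : V) : A :=
  ∐ fun p : Σ j : V, j ⟶ i => (D p.2).obj (M.obj p.1)

/-- The latching map `φᵢᴹ : L_i(M) ⟶ M_i`. -/
noncomputable def latchMap [HasCoproducts.{v} A] (M : DiaRep D) (i : V) :
    latchObj D M i ⟶ M.obj i :=
  Sigma.desc fun p => M.map p.2

/-- A morphism of representations over the diagram `D`. -/
structure DiaRepHom (M N : DiaRep D) where
  app : ∀ i : V, M.obj i ⟶ N.obj i
  naturality : ∀ ⦃i j : V⦄ (a : i ⟶ j),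
    (D a).map (app i) ≫ N.map a = M.map a ≫ app j

/-- The induced morphism `L_i(ω) : L_i(M) ⟶ L_i(N)` on latching objects. -/
noncomputable def latchHom [HasCoproducts.{v} A] {M N : DiaRep D} (ω : DiaRepHom D M N)
    (i : V) : latchObj D M i ⟶ latchObj D N i :=
  Limits.Sigma.map fun p => (D p.2).map (ω.app p.1)

end Paper


open CategoryTheory CategoryTheory.Limits in
lemma aux_mono_sigma_map {A : Type u} [Category.{v} A] [Abelian A] [HasCoproducts.{v} A]
    [AB4 A] {α : Type v} {f g : α → A} (p : ∀ a, f a ⟶ g a) [∀ a, Mono (p a)] :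
    Mono (Limits.Sigma.map p) := by
  let η : Discrete.functor f ⟶ Discrete.functor g := Discrete.natTrans fun X => p X.as
  haveI : ∀ X : Discrete α, Mono (η.app X) := fun X => by
    dsimp only [η, Discrete.natTrans_app]; infer_instance
  haveI : Mono η := NatTrans.mono_of_mono_app η
  have heq : Limits.Sigma.map p = (colim (J := Discrete α) (C := A)).map η := rfl
  rw [heq]
  exact (colim (J := Discrete α) (C := A)).map_mono η

open Paper CategoryTheory CategoryTheory.Limits in
theorem stmt18 {V : Type v} [Quiver.{v} V] (hV : IsLeftRooted V)
    {A : Type u} [Category.{v} A] [Abelian A] [HasCoproducts.{v} A] [AB4 A]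
    (D : ∀ ⦃i j : V⦄, (i ⟶ j) → (A ⥤ A))
    (hDexact : ∀ ⦃i j : V⦄ (a : i ⟶ j),
      Nonempty (PreservesFiniteLimits (D a)) ∧ Nonempty (PreservesFiniteColimits (D a)))
    (hDcoprod : ∀ ⦃i j : V⦄ (a : i ⟶ j) (ι : Type v),
      Nonempty (PreservesColimitsOfShape (Discrete ι) (D a)))
    (Q : V → A → Prop)
    (hQcompat : ∀ ⦃i j : V⦄ (a : i ⟶ j) (X : A), Q i X → Q j ((D a).obj X))
    (M N : DiaRep D) (ω : DiaRepHom D M N)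
    (hρ : ∀ (i : V) (ρ : pushout (latchMap D M i) (latchHom D ω i) ⟶ N.obj i),
      pushout.inl _ _ ≫ ρ = ω.app i → pushout.inr _ _ ≫ ρ = latchMap D N i →
      Mono ρ ∧ Q i (cokernel ρ)) :
    ∀ i : V, Mono (ω.app i) := by
  intro i
  -- main step: if all predecessors are mono, then so is ω.app i
  have main : ∀ i : V, (∀ ⦃j : V⦄ (a : j ⟶ i), Mono (ω.app j)) → Mono (ω.app i) := by
    intro i hpred
    have hmono : ∀ p : Σ j : V, j ⟶ i, Mono ((D p.2).map (ω.app p.1)) := by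
      intro p
      haveI : PreservesFiniteLimits (D p.2) := (hDexact p.2).1.some
      haveI := hpred p.2
      exact (D p.2).map_mono _
    haveI : Mono (latchHom D ω i) := by
      unfold latchHom
      haveI := hmono
      exact aux_mono_sigma_map _
    have hcomm : latchMap D M i ≫ ω.app i = latchHom D ω i ≫ latchMap D N i := by
      apply Sigma.hom_ext
      intro p
      simp only [latchMap, latchHom]
      erw [Sigma.ι_desc_assoc, Sigma.ι_map_assoc, Sigma.ι_desc]
      exact (ω.naturality p.2).symm
    set ρ : pushout (latchMap D M i) (latchHom D ω i) ⟶ N.obj i :=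
      pushout.desc (ω.app i) (latchMap D N i) hcomm with hρdef
    obtain ⟨hρmono, -⟩ := hρ i ρ (pushout.inl_desc _ _ _) (pushout.inr_desc _ _ _)
    have : ω.app i = pushout.inl (latchMap D M i) (latchHom D ω i) ≫ ρ :=
      (pushout.inl_desc _ _ _).symm
    rw [this]
    exact mono_comp _ _
  -- transfinite induction along the root filtration
  have key : ∀ χ : Ordinal.{v}, ∀ i ∈ rootFiltration V χ, Mono (ω.app i) := by
    intro χ
    induction χ using Ordinal.induction with
    | _ χ ih =>
      rcases Ordinal.zero_or_succ_or_isSuccLimit χ with rfl | ⟨χ', rfl⟩ | hlim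
      · intro i hi
        rw [rootFiltration, Ordinal.limitRecOn_zero] at hi
        exact absurd hi (Set.notMem_empty i)
      · intro i hi
        rw [rootFiltration, Ordinal.limitRecOn_succ] at hi
        rcases hi with hi | hi
        · exact ih χ' (Order.lt_succ χ') i hi
        · exact main i fun j a => ih χ' (Order.lt_succ χ') j (hi a)
      · intro i hi
        rw [rootFiltration, Ordinal.limitRecOn_limit _ _ _ _ hlim] at hi
        simp only [Set.mem_iUnion] at hi
        obtain ⟨μ, hμ, hi⟩ := hi
        exact ih μ hμ i hi
  obtain ⟨lam, hlam⟩ := hV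
  exact key lam i (hlam ▸ Set.mem_univ i)
end
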